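/- arXiv:1012.0336 — 3 statements merged into one kernel-verified Lean document; each statement's English description precedes it below -/
import Mathlib

section
/- For every t ≥ 0 the integral ∫₀^∞ r / (((r+t)^2+1)^2 · ((r-t)^2+1)) dr is finite, and the iterated integral ∫₀^∞ (∫₀^∞ r / (((r+t)^2+1)^2 ((r-t)^2+1)) dr)^{1/2} dt is finite. -/
open MeasureTheory Set Filter Topology
open scoped ENNReal

/-- Generic: lintegral over `Ioi 0` of a nonnegative derivative. -/
lemma aux_lintegral_Ioi_deriv {F F' : ℝ → ℝ}
    (hderiv : ∀ x ∈ Set.Ici (0:ℝ), HasDerivAt F (F' x) x)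
    (hpos : ∀ x ∈ Set.Ioi (0:ℝ), 0 ≤ F' x) {l : ℝ} (hl : Tendsto F atTop (𝓝 l)) :
    ∫⁻ x in Set.Ioi (0:ℝ), ENNReal.ofReal (F' x) = ENNReal.ofReal (l - F 0) := by
  have hint := integrableOn_Ioi_deriv_of_nonneg' hderiv hpos hl
  rw [← ofReal_integral_eq_lintegral_ofReal hint
      ((ae_restrict_iff' measurableSet_Ioi).2 (Filter.Eventually.of_forall hpos)),
    integral_Ioi_of_hasDerivAt_of_tendsto' hderiv hint hl]

/-- The basic uniform bound: for `t ≥ 0` the inner integral is at most `1/2`. -/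
lemma aux_bound_half (t : ℝ) (ht : 0 ≤ t) :
    (∫⁻ r in Set.Ioi (0 : ℝ),
        ENNReal.ofReal (r / (((r + t) ^ 2 + 1) ^ 2 * ((r - t) ^ 2 + 1))))
      ≤ ENNReal.ofReal (1/2 : ℝ) := by
  have key : (∫⁻ r in Set.Ioi (0 : ℝ), ENNReal.ofReal (r / ((r^2+1)^2)))
      = ENNReal.ofReal ((0:ℝ) - (-(2*((0:ℝ)^2+1))⁻¹)) := by
    apply aux_lintegral_Ioi_deriv (F := fun r => -(2*(r^2+1))⁻¹)
    · intro x _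
      have h1 : HasDerivAt (fun r : ℝ => 2*(r^2+1)) (2*(2*x)) x := by
        simpa using (((hasDerivAt_pow 2 x).add_const 1).const_mul 2)
      have h2 := (h1.inv (by positivity)).neg
      convert h2 using 1 <;> try rfl
      have hx : (x:ℝ)^2+1 ≠ 0 := by positivity
      field_simp
    · intro x hx
      have : (0:ℝ) < x := hx
      positivity
    · have h1 : Tendsto (fun r : ℝ => 2*(r^2+1)) atTop atTop := by
        apply Filter.Tendsto.const_mul_atTop (by norm_num)
        exact tendsto_atTop_add_const_right _ 1 (tendsto_pow_atTop two_ne_zero)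
      simpa using (h1.inv_tendsto_atTop).neg
  calc (∫⁻ r in Set.Ioi (0 : ℝ),
        ENNReal.ofReal (r / (((r + t) ^ 2 + 1) ^ 2 * ((r - t) ^ 2 + 1))))
      ≤ ∫⁻ r in Set.Ioi (0 : ℝ), ENNReal.ofReal (r / ((r^2+1)^2)) := by
        apply lintegral_mono
        intro r
        rcases le_or_gt r 0 with hr | hr
        · have h0 : ENNReal.ofReal (r / (((r + t) ^ 2 + 1) ^ 2 * ((r - t) ^ 2 + 1))) = 0 :=
            ENNReal.ofReal_eq_zero.2 (div_nonpos_iff.2 (Or.inr ⟨hr, by positivity⟩))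
          simp only [h0]; exact bot_le
        · apply ENNReal.ofReal_le_ofReal
          apply div_le_div_of_nonneg_left hr.le (by positivity)
          nlinarith [mul_nonneg hr.le ht, sq_nonneg (r-t), sq_nonneg (r^2+1),
            mul_nonneg (mul_nonneg hr.le ht) (mul_nonneg hr.le ht),
            sq_nonneg ((r+t)^2 - r^2)]
    _ = ENNReal.ofReal ((0:ℝ) - (-(2*((0:ℝ)^2+1))⁻¹)) := key
    _ ≤ ENNReal.ofReal (1/2 : ℝ) := by norm_num

/-- For `t ≥ 1` the inner integral is at most `1/t³`. -/
lemma aux_bound_cube (t : ℝ) (ht : 1 ≤ t) :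
    (∫⁻ r in Set.Ioi (0 : ℝ),
        ENNReal.ofReal (r / (((r + t) ^ 2 + 1) ^ 2 * ((r - t) ^ 2 + 1))))
      ≤ ENNReal.ofReal (1 / t^3) := by
  have ht0 : (0:ℝ) < t := by linarith
  set a : ℝ := t^2 - 1 with ha
  set c : ℝ := (4*t*(t^2+1))⁻¹ with hc
  have hc0 : 0 < c := by rw [hc]; positivity
  set h : ℝ → ℝ := fun r => (t^2+1)⁻¹ * (r / ((r^2-a)^2 + 4*t^2)) with hh
  have key : (∫⁻ r in Set.Ioi (0 : ℝ), ENNReal.ofReal (h r))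
      = ENNReal.ofReal (c * (Real.pi/2)
          - c * Real.arctan (((0:ℝ)^2 - a)/(2*t))) := by
    apply aux_lintegral_Ioi_deriv (F := fun r => c * Real.arctan ((r^2 - a)/(2*t)))
    · intro x _
      have hu : HasDerivAt (fun r : ℝ => (r^2 - a)/(2*t)) (2*x*(2*t)⁻¹) x := by
        simpa [div_eq_mul_inv] using
          (((hasDerivAt_pow 2 x).sub_const a).mul_const (2*t)⁻¹)
      have h2 := ((Real.hasDerivAt_arctan ((x^2 - a)/(2*t))).comp x hu).const_mul c
      convert h2 using 1 <;> try rfl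
      have hd : ((x^2-a)^2 + 4*t^2) ≠ 0 := by positivity
      rw [hh, hc]
      field_simp
      ring
    · intro x hx
      have hx0 : (0:ℝ) < x := hx
      rw [hh]; positivity
    · apply Filter.Tendsto.const_mul
      apply (tendsto_nhds_of_tendsto_nhdsWithin Real.tendsto_arctan_atTop).comp
      apply Filter.Tendsto.atTop_mul_const (show (0:ℝ) < (2*t)⁻¹ by positivity)
      simpa [sub_eq_add_neg, div_eq_mul_inv] using
        tendsto_atTop_add_const_right atTop (-a) (tendsto_pow_atTop two_ne_zero)
  calc (∫⁻ r in Set.Ioi (0 : ℝ),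
        ENNReal.ofReal (r / (((r + t) ^ 2 + 1) ^ 2 * ((r - t) ^ 2 + 1))))
      ≤ ∫⁻ r in Set.Ioi (0 : ℝ), ENNReal.ofReal (h r) := by
        apply lintegral_mono
        intro r
        rcases le_or_gt r 0 with hr | hr
        · have h0 : ENNReal.ofReal (r / (((r + t) ^ 2 + 1) ^ 2 * ((r - t) ^ 2 + 1))) = 0 :=
            ENNReal.ofReal_eq_zero.2 (div_nonpos_iff.2 (Or.inr ⟨hr, by positivity⟩))
          simp only [h0]; exact bot_le
        · apply ENNReal.ofReal_le_ofReal
          have hB : (0:ℝ) < (r^2-a)^2 + 4*t^2 := by positivity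
          have hQ : (t^2+1) * ((r^2-a)^2 + 4*t^2)
              ≤ ((r + t) ^ 2 + 1) ^ 2 * ((r - t) ^ 2 + 1) := by
            have hid : ((r + t) ^ 2 + 1) ^ 2 * ((r - t) ^ 2 + 1)
                = (t^2+1) * ((r^2-a)^2 + 4*t^2) + (r^2+2*r*t) * ((r^2-a)^2 + 4*t^2) := by
              rw [ha]; ring
            nlinarith [mul_nonneg (by nlinarith [mul_nonneg hr.le ht0.le] :
              (0:ℝ) ≤ r^2+2*r*t) hB.le]
          have hmain := div_le_div_of_nonneg_left hr.le (by positivity :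
            (0:ℝ) < (t^2+1) * ((r^2-a)^2 + 4*t^2)) hQ
          calc r / (((r + t) ^ 2 + 1) ^ 2 * ((r - t) ^ 2 + 1))
              ≤ r / ((t^2+1) * ((r^2-a)^2 + 4*t^2)) := hmain
            _ = h r := by rw [hh]; field_simp
    _ = ENNReal.ofReal (c * (Real.pi/2) - c * Real.arctan (((0:ℝ)^2 - a)/(2*t))) := key
    _ ≤ ENNReal.ofReal (1 / t^3) := by
        apply ENNReal.ofReal_le_ofReal
        have harc : -(Real.pi/2) < Real.arctan (((0:ℝ)^2 - a)/(2*t)) :=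
          Real.neg_pi_div_two_lt_arctan _
        have hπ : Real.pi ≤ 4 := Real.pi_le_four
        have h1 : c * (Real.pi/2) - c * Real.arctan (((0:ℝ)^2 - a)/(2*t))
            ≤ c * Real.pi := by nlinarith
        have h2 : c ≤ (4*t^3)⁻¹ := by
          apply inv_anti₀ (by positivity)
          nlinarith
        have h3 : c * Real.pi ≤ (4*t^3)⁻¹ * 4 :=
          mul_le_mul h2 hπ Real.pi_pos.le (by positivity)
        have h4 : (4*t^3)⁻¹ * 4 = 1 / t^3 := by
          field_simp
        linarith

theorem stmt_2 :
    (∀ t : ℝ, 0 ≤ t →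
      (∫⁻ r in Set.Ioi (0 : ℝ),
        ENNReal.ofReal (r / (((r + t) ^ 2 + 1) ^ 2 * ((r - t) ^ 2 + 1)))) < ⊤) ∧
    (∫⁻ t in Set.Ioi (0 : ℝ),
      ENNReal.ofReal (Real.sqrt
        ((∫⁻ r in Set.Ioi (0 : ℝ),
          ENNReal.ofReal (r / (((r + t) ^ 2 + 1) ^ 2 * ((r - t) ^ 2 + 1)))).toReal))) < ⊤ := by
  constructor
  · intro t ht
    exact lt_of_le_of_lt (aux_bound_half t ht) ENNReal.ofReal_lt_top
  · set I : ℝ → ℝ≥0∞ := fun t => ∫⁻ r in Set.Ioi (0 : ℝ),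
      ENNReal.ofReal (r / (((r + t) ^ 2 + 1) ^ 2 * ((r - t) ^ 2 + 1))) with hI
    set M : ℝ → ℝ≥0∞ := fun t =>
      if t ≤ 1 then ENNReal.ofReal 1 else ENNReal.ofReal (t ^ (-(3/2) : ℝ)) with hM
    have hMmeas : Measurable M := by
      apply Measurable.ite measurableSet_Iic measurable_const
      exact (measurable_id.pow_const _).ennreal_ofReal
    have hbound : ∀ t ∈ Set.Ioi (0:ℝ),
        ENNReal.ofReal (Real.sqrt ((I t).toReal)) ≤ M t := by
      intro t ht
      have ht0 : (0:ℝ) < t := ht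
      rcases le_or_gt t 1 with h1 | h1
      · have hIt : (I t).toReal ≤ (1/2 : ℝ) :=
          ENNReal.toReal_le_of_le_ofReal (by norm_num) (aux_bound_half t ht0.le)
        have : Real.sqrt ((I t).toReal) ≤ 1 :=
          Real.sqrt_le_one.2 (by linarith)
        rw [hM]; simp only [if_pos h1]
        exact ENNReal.ofReal_le_ofReal this
      · have hIt : (I t).toReal ≤ 1 / t^3 :=
          ENNReal.toReal_le_of_le_ofReal (by positivity) (aux_bound_cube t h1.le)
        have hs : Real.sqrt ((I t).toReal) ≤ Real.sqrt (1 / t^3) :=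
          Real.sqrt_le_sqrt hIt
        have heq : Real.sqrt (1 / t^3) = t ^ (-(3/2) : ℝ) := by
          have h3 : (1/t^3 : ℝ) = t ^ (-(3:ℝ)) := by
            rw [Real.rpow_neg ht0.le, one_div]
            congr 1
            rw [← Real.rpow_natCast t 3]; norm_num
          rw [h3, Real.sqrt_eq_rpow, ← Real.rpow_mul ht0.le]
          norm_num
        rw [hM]; simp only [if_neg (not_le.2 h1)]
        exact ENNReal.ofReal_le_ofReal (heq ▸ hs)
    calc (∫⁻ t in Set.Ioi (0:ℝ), ENNReal.ofReal (Real.sqrt ((I t).toReal)))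
        ≤ ∫⁻ t in Set.Ioi (0:ℝ), M t := setLIntegral_mono hMmeas hbound
      _ = (∫⁻ t in Set.Ioc (0:ℝ) 1, M t) + ∫⁻ t in Set.Ioi (1:ℝ), M t := by
          rw [← Set.Ioc_union_Ioi_eq_Ioi (zero_le_one), lintegral_union measurableSet_Ioi
            (Set.Ioc_disjoint_Ioi le_rfl)]
      _ < ⊤ := by
          apply ENNReal.add_lt_top.2
          constructor
          · calc (∫⁻ t in Set.Ioc (0:ℝ) 1, M t)
                ≤ ∫⁻ _ in Set.Ioc (0:ℝ) 1, ENNReal.ofReal 1 :=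
                  setLIntegral_mono measurable_const
                    (fun t htt => by rw [hM]; simp only [if_pos htt.2]; exact le_rfl)
              _ = ENNReal.ofReal 1 * volume (Set.Ioc (0:ℝ) 1) := setLIntegral_const _ _
              _ < ⊤ := by simp [Real.volume_Ioc]
          · have heq : (∫⁻ t in Set.Ioi (1:ℝ), M t)
                = ∫⁻ t in Set.Ioi (1:ℝ), ENNReal.ofReal (t ^ (-(3/2) : ℝ)) := by
              apply setLIntegral_congr_fun_ae measurableSet_Ioi
              exact Filter.Eventually.of_forall
                (fun t htt => by rw [hM]; simp only [if_neg (not_le.2 (Set.mem_Ioi.1 htt))])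
            rw [heq]
            have hint : IntegrableOn (fun t : ℝ => t ^ (-(3/2) : ℝ)) (Set.Ioi (1:ℝ)) :=
              integrableOn_Ioi_rpow_of_lt (by norm_num) one_pos
            rw [← ofReal_integral_eq_lintegral_ofReal hint
              ((ae_restrict_iff' measurableSet_Ioi).2 (Filter.Eventually.of_forall
                (fun t htt => Real.rpow_nonneg (by linarith [Set.mem_Ioi.1 htt] : (0:ℝ) ≤ t) _)))]
            exact ENNReal.ofReal_lt_top
end

section
/- The integral ∫₀^∞ (t^2+1)^{-3/4} · (∫₀^∞ r / (√(r^2+1) · ((r-t)^2+1)) dr)^{1/2} dt is finite. -/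
open MeasureTheory Real

lemma inner_bound (t : ℝ) :
    (∫⁻ r in Set.Ioi (0 : ℝ),
      ENNReal.ofReal (r / (Real.sqrt (r ^ 2 + 1) * ((r - t) ^ 2 + 1)))) ≤
    ENNReal.ofReal π := by
  have hint : Integrable (fun r : ℝ => (1 + (r - t) ^ 2)⁻¹) :=
    integrable_inv_one_add_sq.comp_sub_right t
  calc (∫⁻ r in Set.Ioi (0 : ℝ),
      ENNReal.ofReal (r / (Real.sqrt (r ^ 2 + 1) * ((r - t) ^ 2 + 1))))
      ≤ ∫⁻ r in Set.Ioi (0 : ℝ), ENNReal.ofReal ((1 + (r - t) ^ 2)⁻¹) := by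
        apply lintegral_mono
        intro r
        apply ENNReal.ofReal_le_ofReal
        have h1 : (0:ℝ) < (r - t) ^ 2 + 1 := by positivity
        have h2 : (0:ℝ) < Real.sqrt (r ^ 2 + 1) := Real.sqrt_pos.2 (by positivity)
        have hr : r ≤ Real.sqrt (r ^ 2 + 1) := by
          rcases le_or_gt r 0 with h | h
          · exact h.trans h2.le
          · exact (Real.le_sqrt h.le (by positivity)).2 (by nlinarith)
        rw [← one_div, div_le_div_iff₀ (by positivity) (by positivity)]
        nlinarith [mul_le_mul_of_nonneg_right hr h1.le]
    _ ≤ ∫⁻ r, ENNReal.ofReal ((1 + (r - t) ^ 2)⁻¹) :=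
        setLIntegral_le_lintegral _ _
    _ = ENNReal.ofReal (∫ r, (1 + (r - t) ^ 2)⁻¹) := by
        rw [← ofReal_integral_eq_lintegral_ofReal hint]
        exact Filter.Eventually.of_forall fun r => by positivity
    _ = ENNReal.ofReal π := by
        rw [show (fun r : ℝ => (1 + (r - t) ^ 2)⁻¹) = fun r => ((fun x : ℝ => (1 + x ^ 2)⁻¹) (r - t)) from rfl,
          integral_sub_right_eq_self (fun x : ℝ => (1 + x ^ 2)⁻¹) t,
          integral_univ_inv_one_add_sq]

lemma outer_integrable :
    IntegrableOn (fun t : ℝ => Real.sqrt π * (t ^ 2 + 1) ^ (-(3 : ℝ) / 4)) (Set.Ioi 0) := by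
  apply Integrable.const_mul
  have h1 : IntegrableOn (fun t : ℝ => (t ^ 2 + 1) ^ (-(3 : ℝ) / 4)) (Set.Ioc 0 1) := by
    exact ((ContinuousOn.rpow_const (by fun_prop) (fun x _ => Or.inl (by positivity))).integrableOn_compact
      isCompact_Icc).mono_set Set.Ioc_subset_Icc_self
  have h2 : IntegrableOn (fun t : ℝ => (t ^ 2 + 1) ^ (-(3 : ℝ) / 4)) (Set.Ioi 1) := by
    have hmeas : AEStronglyMeasurable (fun t : ℝ => (t ^ 2 + 1) ^ (-(3 : ℝ) / 4))
        (volume.restrict (Set.Ioi (1:ℝ))) :=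
      (((continuous_pow 2).add continuous_const).rpow_const
        (fun x => Or.inl (by simp only [Pi.add_apply]; positivity))).aestronglyMeasurable
    apply Integrable.mono' (g := fun t : ℝ => t ^ (-(3:ℝ)/2))
      (integrableOn_Ioi_rpow_of_lt (by norm_num) one_pos) hmeas
    filter_upwards [ae_restrict_mem measurableSet_Ioi] with t ht
    have ht1 : (1:ℝ) < t := ht
    rw [Real.norm_eq_abs, abs_of_nonneg (by positivity)]
    have : t ^ (-(3:ℝ)/2) = (t ^ 2) ^ (-(3:ℝ)/4) := by
      rw [← Real.rpow_natCast t 2, ← Real.rpow_mul (by linarith)]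
      norm_num
    rw [this]
    apply Real.rpow_le_rpow_of_nonpos (by positivity) (by linarith) (by norm_num)
  have := h1.union h2
  rwa [Set.Ioc_union_Ioi_eq_Ioi (by norm_num)] at this

theorem stmt_3 :
    (∫⁻ t in Set.Ioi (0 : ℝ),
      ENNReal.ofReal ((t ^ 2 + 1) ^ (-(3 : ℝ) / 4) *
        Real.sqrt ((∫⁻ r in Set.Ioi (0 : ℝ),
          ENNReal.ofReal (r / (Real.sqrt (r ^ 2 + 1) * ((r - t) ^ 2 + 1)))).toReal))) < ⊤ := by
  have hb : ∀ t : ℝ,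
      ENNReal.ofReal ((t ^ 2 + 1) ^ (-(3 : ℝ) / 4) *
        Real.sqrt ((∫⁻ r in Set.Ioi (0 : ℝ),
          ENNReal.ofReal (r / (Real.sqrt (r ^ 2 + 1) * ((r - t) ^ 2 + 1)))).toReal)) ≤
      ENNReal.ofReal (Real.sqrt π * (t ^ 2 + 1) ^ (-(3 : ℝ) / 4)) := by
    intro t
    apply ENNReal.ofReal_le_ofReal
    rw [mul_comm (Real.sqrt π)]
    apply mul_le_mul_of_nonneg_left _ (by positivity)
    apply Real.sqrt_le_sqrt
    have := inner_bound t
    calc (∫⁻ r in Set.Ioi (0 : ℝ),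
        ENNReal.ofReal (r / (Real.sqrt (r ^ 2 + 1) * ((r - t) ^ 2 + 1)))).toReal
        ≤ (ENNReal.ofReal π).toReal := ENNReal.toReal_mono ENNReal.ofReal_ne_top this
      _ = π := ENNReal.toReal_ofReal Real.pi_pos.le
  calc (∫⁻ t in Set.Ioi (0 : ℝ),
      ENNReal.ofReal ((t ^ 2 + 1) ^ (-(3 : ℝ) / 4) *
        Real.sqrt ((∫⁻ r in Set.Ioi (0 : ℝ),
          ENNReal.ofReal (r / (Real.sqrt (r ^ 2 + 1) * ((r - t) ^ 2 + 1)))).toReal)))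
      ≤ ∫⁻ t in Set.Ioi (0 : ℝ),
        ENNReal.ofReal (Real.sqrt π * (t ^ 2 + 1) ^ (-(3 : ℝ) / 4)) :=
        lintegral_mono fun t => hb t
    _ < ⊤ := outer_integrable.lintegral_lt_top
end

section
/- Suppose u, v : ℝ² → ℝ (functions of (r,t) with r,t ≥ 0) satisfy |u(r,t)| ≤ c/(((t+r)^2+1)^{1/4} √((t-r)^2+1)) and |v(r,t)| ≤ c/(((t+r)^2+1)^{3/4}) for some c > 0. Then ∫₀^∞ (∫₀^∞ |u(r,t)|² |v(r,t)|² r dr)^{1/2} dt ≤ c² ∫₀^∞ (∫₀^∞ r /(((r+t)^2+1)^2 ((r-t)^2+1)) dr)^{1/2} dt < ∞. -/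
open MeasureTheory Set Filter Real Topology

namespace Stmt14Aux

lemma rpow_n32 (x : ℝ) (hx : 0 < x) : x ^ (-(3:ℝ)/2) = (x * Real.sqrt x)⁻¹ := by
  rw [show (-(3:ℝ)/2) = -((3:ℝ)/2) by norm_num, Real.rpow_neg hx.le]
  congr 1
  rw [show ((3:ℝ)/2) = 1 + 1/(2:ℝ) by norm_num, Real.rpow_add hx, Real.rpow_one,
    ← Real.sqrt_eq_rpow]

lemma case1 (r P Q A B p q : ℝ) (hr : 0 ≤ r) (hP : 0 < P) (hQ : 0 < Q) (hA : 0 < A)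
    (hB : 0 < B) (hp : 0 < p) (hq : 0 < q) (hq2 : q^2 = Q) (hPA : P ≤ A) (hQA : Q ≤ A)
    (hqr : q^2 ≤ 4*r^2+1) (hPdef : P = r^2+1) :
    r / (A^2 * B) ≤ (Q * q)⁻¹ * (3 * B⁻¹ + 2 * r * (P * p)⁻¹) := by
  have h1 : r * q ≤ 3 * P := by nlinarith [sq_nonneg (q - 2*r)]
  have hPQA : P * Q ≤ A^2 := by
    nlinarith [mul_le_mul_of_nonneg_right hPA hQ.le, mul_le_mul_of_nonneg_left hQA hA.le]
  have key : r * (Q * q * B) ≤ 3 * (A^2 * B) := by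
    have s1 : r * q * (Q * B) ≤ 3 * P * (Q * B) :=
      mul_le_mul_of_nonneg_right h1 (by positivity)
    have s3 : 3 * (P * Q) * B ≤ 3 * A^2 * B := by
      nlinarith [mul_le_mul_of_nonneg_right hPQA hB.le]
    nlinarith [s1, s3]
  have hdiv : r / (A^2 * B) ≤ 3 / (Q * q * B) := by
    rw [div_le_div_iff₀ (by positivity) (by positivity)]
    nlinarith [key]
  have heq : 3 / (Q * q * B) = (Q * q)⁻¹ * (3 * B⁻¹) := by field_simp
  have hnn : 0 ≤ (Q * q)⁻¹ * (2 * r * (P * p)⁻¹) := by positivity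
  calc r / (A^2 * B) ≤ 3 / (Q * q * B) := hdiv
    _ = (Q * q)⁻¹ * (3 * B⁻¹) := heq
    _ ≤ (Q * q)⁻¹ * (3 * B⁻¹ + 2 * r * (P * p)⁻¹) := by rw [mul_add]; linarith

lemma case2 (r P Q A B p q : ℝ) (hr : 0 ≤ r) (hP : 0 < P) (hQ : 0 < Q) (hA : 0 < A)
    (hB : 0 < B) (hp : 0 < p) (hq : 0 < q) (hp2 : p^2 = P) (hq2 : q^2 = Q)
    (hPA : P ≤ A) (hQA : Q ≤ A) (hBP : P ≤ B) (hBQ : Q ≤ 4*B) :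
    r / (A^2 * B) ≤ (Q * q)⁻¹ * (3 * B⁻¹ + 2 * r * (P * p)⁻¹) := by
  have hPQA : P * Q ≤ A^2 := by
    nlinarith [mul_le_mul_of_nonneg_right hPA hQ.le, mul_le_mul_of_nonneg_left hQA hA.le]
  have hpq : p * q ≤ 2 * B := by nlinarith [mul_le_mul_of_nonneg_right hBP hQ.le]
  have key : P * p * (Q * q) ≤ 2 * (A^2 * B) := by
    have h := mul_le_mul hPQA hpq (by positivity) (by positivity)
    nlinarith [h]
  have hdiv : r / (A^2 * B) ≤ (2 * r) / (P * p * (Q * q)) := by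
    rw [div_le_div_iff₀ (by positivity) (by positivity)]
    nlinarith [mul_le_mul_of_nonneg_left key hr]
  have heq : (2 * r) / (P * p * (Q * q)) = (Q * q)⁻¹ * (2 * r * (P * p)⁻¹) := by
    rw [div_eq_mul_inv, mul_inv]; ring
  have hnn : 0 ≤ (Q * q)⁻¹ * (3 * B⁻¹) := by positivity
  calc r / (A^2 * B) ≤ (2 * r) / (P * p * (Q * q)) := hdiv
    _ = (Q * q)⁻¹ * (2 * r * (P * p)⁻¹) := heq
    _ ≤ (Q * q)⁻¹ * (3 * B⁻¹ + 2 * r * (P * p)⁻¹) := by rw [mul_add]; linarith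

lemma g_le_h (r t : ℝ) (hr : 0 ≤ r) (ht : 0 ≤ t) :
    r / (((r+t)^2+1)^2 * ((r-t)^2+1)) ≤
      (t^2+1) ^ (-(3:ℝ)/2) * (3 * ((r-t)^2+1)⁻¹ + 2 * r * ((r^2+1) ^ (-(3:ℝ)/2))) := by
  have hP : (0:ℝ) < r^2+1 := by positivity
  have hQ : (0:ℝ) < t^2+1 := by positivity
  have hA : (0:ℝ) < (r+t)^2+1 := by positivity
  have hB : (0:ℝ) < (r-t)^2+1 := by positivity
  have hp2 : (Real.sqrt (r^2+1))^2 = r^2+1 := Real.sq_sqrt hP.le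
  have hq2 : (Real.sqrt (t^2+1))^2 = t^2+1 := Real.sq_sqrt hQ.le
  rw [rpow_n32 _ hQ, rpow_n32 _ hP]
  rcases le_or_gt t (2*r) with hcase | hcase
  · exact case1 r _ _ _ _ _ _ hr hP hQ hA hB (Real.sqrt_pos.2 hP) (Real.sqrt_pos.2 hQ)
      hq2 (by nlinarith) (by nlinarith) (by nlinarith) rfl
  · exact case2 r _ _ _ _ _ _ hr hP hQ hA hB (Real.sqrt_pos.2 hP) (Real.sqrt_pos.2 hQ)
      hp2 hq2 (by nlinarith) (by nlinarith) (by nlinarith) (by nlinarith)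

lemma deriv1 (x : ℝ) :
    HasDerivAt (fun r : ℝ => -2 * ((r^2+1) ^ (-(1:ℝ)/2))) (2 * x * (x^2+1) ^ (-(3:ℝ)/2)) x := by
  have h1 : HasDerivAt (fun r : ℝ => r^2+1) (2*x) x := by
    simpa using (hasDerivAt_pow 2 x).add_const 1
  have h2 := (h1.rpow_const (p := -(1:ℝ)/2)
    (Or.inl (ne_of_gt (by positivity : (0:ℝ) < x^2+1)))).const_mul (-2 : ℝ)
  refine h2.congr_deriv ?_
  rw [show (-(1:ℝ)/2 - 1) = -(3:ℝ)/2 by norm_num]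
  ring

lemma tendsto1 : Tendsto (fun r : ℝ => -2 * ((r^2+1) ^ (-(1:ℝ)/2))) atTop (𝓝 0) := by
  have h1 : Tendsto (fun r : ℝ => r^2+1) atTop atTop :=
    (tendsto_pow_atTop (two_ne_zero)).atTop_add tendsto_const_nhds
  have h2 : Tendsto (fun y : ℝ => y ^ (-(1:ℝ)/2)) atTop (𝓝 0) := by
    rw [show (-(1:ℝ)/2) = -(1/2 : ℝ) by norm_num]
    exact tendsto_rpow_neg_atTop (by norm_num)
  simpa using (h2.comp h1).const_mul (-2 : ℝ)

lemma integral2 : ∫ r in Ioi (0:ℝ), 2 * r * (r^2+1) ^ (-(3:ℝ)/2) = 2 := by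
  have := integral_Ioi_of_hasDerivAt_of_nonneg (a := (0:ℝ))
    (g := fun r : ℝ => -2 * ((r^2+1) ^ (-(1:ℝ)/2)))
    (g' := fun r : ℝ => 2 * r * (r^2+1) ^ (-(3:ℝ)/2))
    ((deriv1 0).continuousAt.continuousWithinAt)
    (fun x hx => deriv1 x)
    (fun x hx => by have hx' : (0:ℝ) ≤ x := le_of_lt hx; positivity) tendsto1
  rw [this]
  norm_num

lemma integrable2 : IntegrableOn (fun r : ℝ => 2 * r * (r^2+1) ^ (-(3:ℝ)/2)) (Ioi (0:ℝ)) :=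
  integrableOn_Ioi_deriv_of_nonneg ((deriv1 0).continuousAt.continuousWithinAt)
    (fun x hx => deriv1 x)
    (fun x hx => by have hx' : (0:ℝ) ≤ x := le_of_lt hx; positivity) tendsto1

lemma integrable_h1 (t : ℝ) : IntegrableOn (fun r : ℝ => 3 * ((r-t)^2+1)⁻¹) (Ioi (0:ℝ)) := by
  have h := (integrable_inv_one_add_sq.comp_sub_right t).const_mul 3
  simp_rw [add_comm (1:ℝ)] at h
  exact h.integrableOn

lemma integral_h1_le (t : ℝ) : ∫ r in Ioi (0:ℝ), 3 * ((r-t)^2+1)⁻¹ ≤ 3 * π := by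
  have hint : Integrable (fun r : ℝ => 3 * ((r-t)^2+1)⁻¹) := by
    have h := (integrable_inv_one_add_sq.comp_sub_right t).const_mul 3
    simp_rw [add_comm (1:ℝ)] at h
    exact h
  have h1 : ∫ r in Ioi (0:ℝ), 3 * ((r-t)^2+1)⁻¹ ≤ ∫ r : ℝ, 3 * ((r-t)^2+1)⁻¹ := by
    apply setIntegral_le_integral hint
    filter_upwards with x
    positivity
  have h2 : ∫ r : ℝ, 3 * ((r-t)^2+1)⁻¹ = 3 * π := by
    rw [MeasureTheory.integral_const_mul]
    have : ∫ r : ℝ, ((r-t)^2+1)⁻¹ = ∫ r : ℝ, (1 + r^2)⁻¹ := by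
      rw [← integral_sub_right_eq_self (fun r : ℝ => (1 + r^2)⁻¹) t]
      congr 1
      ext r
      rw [add_comm]
    rw [this, integral_univ_inv_one_add_sq]
  linarith

lemma J_le (t : ℝ) (ht : 0 ≤ t) :
    (∫⁻ r in Set.Ioi (0:ℝ),
        ENNReal.ofReal (r / (((r + t) ^ 2 + 1) ^ 2 * ((r - t) ^ 2 + 1)))) ≤
      ENNReal.ofReal (12 * (t^2+1) ^ (-(3:ℝ)/2)) := by
  have hQ : (0:ℝ) < t^2+1 := by positivity
  set C : ℝ := (t^2+1) ^ (-(3:ℝ)/2) with hCdef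
  have hC : 0 ≤ C := by rw [hCdef]; positivity
  have hInt : IntegrableOn
      (fun r : ℝ => C * (3 * ((r-t)^2+1)⁻¹ + 2 * r * ((r^2+1) ^ (-(3:ℝ)/2)))) (Ioi (0:ℝ)) :=
    ((integrable_h1 t).add integrable2).const_mul C
  have hnn : 0 ≤ᵐ[volume.restrict (Ioi (0:ℝ))]
      (fun r : ℝ => C * (3 * ((r-t)^2+1)⁻¹ + 2 * r * ((r^2+1) ^ (-(3:ℝ)/2)))) := by
    filter_upwards [ae_restrict_mem measurableSet_Ioi] with r hr
    have hr' : (0:ℝ) ≤ r := le_of_lt hr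
    positivity
  calc (∫⁻ r in Set.Ioi (0:ℝ),
        ENNReal.ofReal (r / (((r + t) ^ 2 + 1) ^ 2 * ((r - t) ^ 2 + 1))))
      ≤ ∫⁻ r in Set.Ioi (0:ℝ),
          ENNReal.ofReal (C * (3 * ((r-t)^2+1)⁻¹ + 2 * r * ((r^2+1) ^ (-(3:ℝ)/2)))) := by
        refine setLIntegral_mono' measurableSet_Ioi fun r hr => ?_
        exact ENNReal.ofReal_le_ofReal (g_le_h r t (le_of_lt hr) ht)
    _ = ENNReal.ofReal (∫ r in Set.Ioi (0:ℝ),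
          C * (3 * ((r-t)^2+1)⁻¹ + 2 * r * ((r^2+1) ^ (-(3:ℝ)/2)))) :=
        (ofReal_integral_eq_lintegral_ofReal hInt hnn).symm
    _ ≤ ENNReal.ofReal (12 * C) := by
        apply ENNReal.ofReal_le_ofReal
        rw [MeasureTheory.integral_const_mul]
        have hadd : ∫ r in Set.Ioi (0:ℝ),
            (3 * ((r-t)^2+1)⁻¹ + 2 * r * ((r^2+1) ^ (-(3:ℝ)/2)))
            = (∫ r in Set.Ioi (0:ℝ), 3 * ((r-t)^2+1)⁻¹)
              + ∫ r in Set.Ioi (0:ℝ), 2 * r * ((r^2+1) ^ (-(3:ℝ)/2)) :=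
          integral_add (integrable_h1 t) integrable2
        rw [hadd, integral2]
        have hpi : (3:ℝ) * π + 2 ≤ 12 := by
          have := Real.pi_lt_d2
          linarith
        nlinarith [hC, integral_h1_le t]

lemma derivO (x : ℝ) (hx : x ∈ Ici (0:ℝ)) :
    HasDerivAt (fun t : ℝ => -16 * ((1+t) ^ (-(1:ℝ)/2))) (8 * (1+x) ^ (-(3:ℝ)/2)) x := by
  have h1 : HasDerivAt (fun t : ℝ => 1+t) 1 x := (hasDerivAt_id x).const_add 1
  have hne : (1+x) ≠ 0 := by have : (0:ℝ) ≤ x := hx; positivity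
  have h2 := (h1.rpow_const (p := -(1:ℝ)/2) (Or.inl hne)).const_mul (-16 : ℝ)
  refine h2.congr_deriv ?_
  rw [show (-(1:ℝ)/2 - 1) = -(3:ℝ)/2 by norm_num]
  ring

lemma tendstoO : Tendsto (fun t : ℝ => -16 * ((1+t) ^ (-(1:ℝ)/2))) atTop (𝓝 0) := by
  have h1 : Tendsto (fun t : ℝ => 1+t) atTop atTop := tendsto_atTop_add_const_left _ 1 tendsto_id
  have h2 : Tendsto (fun y : ℝ => y ^ (-(1:ℝ)/2)) atTop (𝓝 0) := by
    rw [show (-(1:ℝ)/2) = -(1/2 : ℝ) by norm_num]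
    exact tendsto_rpow_neg_atTop (by norm_num)
  simpa using (h2.comp h1).const_mul (-16 : ℝ)

lemma integrableO' : IntegrableOn (fun t : ℝ => 8 * (1+t) ^ (-(3:ℝ)/2)) (Ioi (0:ℝ)) :=
  integrableOn_Ioi_deriv_of_nonneg' derivO
    (fun x hx => by have hx' : (0:ℝ) ≤ x := le_of_lt hx; positivity) tendstoO

lemma contO : Continuous (fun t : ℝ => 4 * (t^2+1) ^ (-(3:ℝ)/4)) := by
  have : Continuous (fun t : ℝ => t^2 + 1) := by continuity
  exact continuous_const.mul (this.rpow_const (fun x => Or.inl (by positivity)))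

lemma boundO (t : ℝ) (ht : 0 ≤ t) :
    4 * (t^2+1) ^ (-(3:ℝ)/4) ≤ 8 * (1+t) ^ (-(3:ℝ)/2) := by
  have hQ : (0:ℝ) < t^2+1 := by positivity
  have h1t : (0:ℝ) < 1+t := by positivity
  have key : (1+t) ^ ((3:ℝ)/2) ≤ 2 * (t^2+1) ^ ((3:ℝ)/4) := by
    have e1 : (1+t) ^ ((3:ℝ)/2) = ((1+t)^2) ^ ((3:ℝ)/4) := by
      rw [← Real.rpow_natCast (1+t) 2, ← Real.rpow_mul h1t.le]
      norm_num
    have e2 : ((1+t)^2 : ℝ) ≤ 2 * (t^2+1) := by nlinarith [sq_nonneg (t-1)]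
    calc (1+t) ^ ((3:ℝ)/2) = ((1+t)^2) ^ ((3:ℝ)/4) := e1
      _ ≤ (2 * (t^2+1)) ^ ((3:ℝ)/4) := by
          apply Real.rpow_le_rpow (by positivity) e2 (by norm_num)
      _ = 2 ^ ((3:ℝ)/4) * (t^2+1) ^ ((3:ℝ)/4) := by
          rw [Real.mul_rpow (by norm_num) hQ.le]
      _ ≤ 2 * (t^2+1) ^ ((3:ℝ)/4) := by
          have h2 : (2:ℝ) ^ ((3:ℝ)/4) ≤ 2 ^ (1:ℝ) :=
            Real.rpow_le_rpow_of_exponent_le (by norm_num) (by norm_num)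
          rw [Real.rpow_one] at h2
          exact mul_le_mul_of_nonneg_right h2 (by positivity)
  rw [show (-(3:ℝ)/4) = -((3:ℝ)/4) by norm_num, show (-(3:ℝ)/2) = -((3:ℝ)/2) by norm_num,
      Real.rpow_neg hQ.le, Real.rpow_neg h1t.le]
  rw [show (4:ℝ) * ((t^2+1) ^ ((3:ℝ)/4))⁻¹ = 4 / (t^2+1) ^ ((3:ℝ)/4) by ring,
      show (8:ℝ) * ((1+t) ^ ((3:ℝ)/2))⁻¹ = 8 / (1+t) ^ ((3:ℝ)/2) by ring]
  rw [div_le_div_iff₀ (by positivity) (by positivity)]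
  nlinarith [Real.rpow_nonneg hQ.le ((3:ℝ)/4), Real.rpow_nonneg h1t.le ((3:ℝ)/2)]

lemma integrableO : IntegrableOn (fun t : ℝ => 4 * (t^2+1) ^ (-(3:ℝ)/4)) (Ioi (0:ℝ)) := by
  apply Integrable.mono' integrableO' (contO.aestronglyMeasurable.restrict)
  filter_upwards [ae_restrict_mem measurableSet_Ioi] with t ht
  rw [Real.norm_eq_abs, abs_of_nonneg (by positivity)]
  exact boundO t (le_of_lt ht)

lemma sqrt12_le : Real.sqrt 12 ≤ 4 := by
  have h16 : Real.sqrt 16 = 4 := by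
    rw [show (16:ℝ) = 4^2 by norm_num]
    exact Real.sqrt_sq (by norm_num)
  calc Real.sqrt 12 ≤ Real.sqrt 16 := Real.sqrt_le_sqrt (by norm_num)
    _ = 4 := h16

lemma sqrt_J_bound (t : ℝ) (ht : 0 ≤ t) :
    Real.sqrt ((∫⁻ r in Set.Ioi (0:ℝ),
        ENNReal.ofReal (r / (((r + t) ^ 2 + 1) ^ 2 * ((r - t) ^ 2 + 1)))).toReal) ≤
      4 * (t^2+1) ^ (-(3:ℝ)/4) := by
  have hQ : (0:ℝ) < t^2+1 := by positivity
  have h1 : (∫⁻ r in Set.Ioi (0:ℝ),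
      ENNReal.ofReal (r / (((r + t) ^ 2 + 1) ^ 2 * ((r - t) ^ 2 + 1)))).toReal
      ≤ 12 * (t^2+1) ^ (-(3:ℝ)/2) :=
    ENNReal.toReal_le_of_le_ofReal (by positivity) (J_le t ht)
  calc Real.sqrt _ ≤ Real.sqrt (12 * (t^2+1) ^ (-(3:ℝ)/2)) := Real.sqrt_le_sqrt h1
    _ = Real.sqrt 12 * Real.sqrt ((t^2+1) ^ (-(3:ℝ)/2)) := Real.sqrt_mul (by norm_num) _
    _ = Real.sqrt 12 * (t^2+1) ^ (-(3:ℝ)/4) := by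
        have hs : Real.sqrt ((t^2+1) ^ (-(3:ℝ)/2)) = (t^2+1) ^ (-(3:ℝ)/4) := by
          rw [Real.sqrt_eq_rpow, ← Real.rpow_mul hQ.le]
          norm_num
        rw [hs]
    _ ≤ 4 * (t^2+1) ^ (-(3:ℝ)/4) :=
        mul_le_mul_of_nonneg_right sqrt12_le (by positivity)

end Stmt14Aux

open Stmt14Aux in
theorem stmt_14 (u v : ℝ → ℝ → ℝ) (c : ℝ) (hc : 0 < c)
    (hu : ∀ r t : ℝ, 0 ≤ r → 0 ≤ t →
      |u r t| ≤ c / (((t + r) ^ 2 + 1) ^ ((1 : ℝ) / 4) * Real.sqrt ((t - r) ^ 2 + 1)))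
    (hv : ∀ r t : ℝ, 0 ≤ r → 0 ≤ t →
      |v r t| ≤ c / ((t + r) ^ 2 + 1) ^ ((3 : ℝ) / 4)) :
    (∫⁻ t in Set.Ioi (0 : ℝ),
        ENNReal.ofReal (Real.sqrt
          ((∫⁻ r in Set.Ioi (0 : ℝ),
            ENNReal.ofReal ((u r t) ^ 2 * (v r t) ^ 2 * r)).toReal))) ≤
      ENNReal.ofReal (c ^ 2) *
        (∫⁻ t in Set.Ioi (0 : ℝ),
          ENNReal.ofReal (Real.sqrt
            ((∫⁻ r in Set.Ioi (0 : ℝ),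
              ENNReal.ofReal (r / (((r + t) ^ 2 + 1) ^ 2 * ((r - t) ^ 2 + 1)))).toReal))) ∧
    (∫⁻ t in Set.Ioi (0 : ℝ),
        ENNReal.ofReal (Real.sqrt
          ((∫⁻ r in Set.Ioi (0 : ℝ),
            ENNReal.ofReal (r / (((r + t) ^ 2 + 1) ^ 2 * ((r - t) ^ 2 + 1)))).toReal))) < ⊤ := by
  set I : ℝ → ENNReal := fun t => ∫⁻ r in Set.Ioi (0 : ℝ),
      ENNReal.ofReal (r / (((r + t) ^ 2 + 1) ^ 2 * ((r - t) ^ 2 + 1))) with hIdef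
  have uv : ∀ r t : ℝ, 0 ≤ r → 0 ≤ t →
      (u r t) ^ 2 * (v r t) ^ 2 * r
        ≤ c ^ 4 * (r / (((r + t) ^ 2 + 1) ^ 2 * ((r - t) ^ 2 + 1))) := by
    intro r t hr ht
    have hA : (0:ℝ) < (t + r) ^ 2 + 1 := by positivity
    have hB : (0:ℝ) < (t - r) ^ 2 + 1 := by positivity
    have ha2 : (u r t) ^ 2 ≤ (c / (((t + r) ^ 2 + 1) ^ ((1:ℝ)/4)
        * Real.sqrt ((t - r) ^ 2 + 1))) ^ 2 := by
      rw [← sq_abs]; exact pow_le_pow_left₀ (abs_nonneg _) (hu r t hr ht) 2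
    have hb2 : (v r t) ^ 2 ≤ (c / ((t + r) ^ 2 + 1) ^ ((3:ℝ)/4)) ^ 2 := by
      rw [← sq_abs]; exact pow_le_pow_left₀ (abs_nonneg _) (hv r t hr ht) 2
    have hprod : (u r t) ^ 2 * (v r t) ^ 2
        ≤ (c / (((t + r) ^ 2 + 1) ^ ((1:ℝ)/4) * Real.sqrt ((t - r) ^ 2 + 1))) ^ 2
          * (c / ((t + r) ^ 2 + 1) ^ ((3:ℝ)/4)) ^ 2 :=
      mul_le_mul ha2 hb2 (sq_nonneg _) (by positivity)
    have heq : (c / (((t + r) ^ 2 + 1) ^ ((1:ℝ)/4) * Real.sqrt ((t - r) ^ 2 + 1))) ^ 2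
        * (c / ((t + r) ^ 2 + 1) ^ ((3:ℝ)/4)) ^ 2
        = c ^ 4 / ((((t + r) ^ 2 + 1)) ^ 2 * ((t - r) ^ 2 + 1)) := by
      rw [div_pow, div_pow, mul_pow, ← Real.rpow_natCast ((((t + r) ^ 2 + 1)) ^ ((1:ℝ)/4)) 2,
        ← Real.rpow_natCast ((((t + r) ^ 2 + 1)) ^ ((3:ℝ)/4)) 2, ← Real.rpow_mul hA.le,
        ← Real.rpow_mul hA.le, Real.sq_sqrt hB.le, div_mul_div_comm]
      have e1 : ((1:ℝ)/4 * (2:ℕ)) = (1:ℝ)/2 := by push_cast; norm_num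
      have e2 : ((3:ℝ)/4 * (2:ℕ)) = (3:ℝ)/2 := by push_cast; norm_num
      rw [e1, e2]
      have e3 : ((t + r) ^ 2 + 1) ^ ((1:ℝ)/2) * ((t - r) ^ 2 + 1)
          * ((t + r) ^ 2 + 1) ^ ((3:ℝ)/2) = ((t + r) ^ 2 + 1) ^ 2 * ((t - r) ^ 2 + 1) := by
        rw [mul_right_comm, ← Real.rpow_add hA]
        norm_num
      rw [e3]
      ring
    rw [heq] at hprod
    have hAe : ((t + r) ^ 2 + 1) = ((r + t) ^ 2 + 1) := by ring
    have hBe : ((t - r) ^ 2 + 1) = ((r - t) ^ 2 + 1) := by ring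
    rw [hAe, hBe] at hprod
    calc (u r t) ^ 2 * (v r t) ^ 2 * r
        ≤ (c ^ 4 / (((r + t) ^ 2 + 1) ^ 2 * ((r - t) ^ 2 + 1))) * r :=
          mul_le_mul_of_nonneg_right hprod hr
      _ = c ^ 4 * (r / (((r + t) ^ 2 + 1) ^ 2 * ((r - t) ^ 2 + 1))) := by ring
  have hpt1 : ∀ t ∈ Set.Ioi (0:ℝ),
      ENNReal.ofReal (Real.sqrt ((∫⁻ r in Set.Ioi (0 : ℝ),
        ENNReal.ofReal ((u r t) ^ 2 * (v r t) ^ 2 * r)).toReal))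
      ≤ ENNReal.ofReal (c ^ 2) * ENNReal.ofReal (Real.sqrt ((I t).toReal)) := by
    intro t ht
    have ht' : (0:ℝ) ≤ t := le_of_lt ht
    have hItop : I t ≠ ⊤ := (lt_of_le_of_lt (J_le t ht') ENNReal.ofReal_lt_top).ne
    have hIu : (∫⁻ r in Set.Ioi (0 : ℝ),
        ENNReal.ofReal ((u r t) ^ 2 * (v r t) ^ 2 * r)) ≤ ENNReal.ofReal (c ^ 4) * I t := by
      calc (∫⁻ r in Set.Ioi (0 : ℝ), ENNReal.ofReal ((u r t) ^ 2 * (v r t) ^ 2 * r))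
          ≤ ∫⁻ r in Set.Ioi (0 : ℝ), ENNReal.ofReal (c ^ 4
            * (r / (((r + t) ^ 2 + 1) ^ 2 * ((r - t) ^ 2 + 1)))) :=
            setLIntegral_mono' measurableSet_Ioi fun r hr =>
              ENNReal.ofReal_le_ofReal (uv r t (le_of_lt hr) ht')
        _ = ∫⁻ r in Set.Ioi (0 : ℝ), ENNReal.ofReal (c ^ 4)
            * ENNReal.ofReal (r / (((r + t) ^ 2 + 1) ^ 2 * ((r - t) ^ 2 + 1))) := by
            simp_rw [ENNReal.ofReal_mul (by positivity : (0:ℝ) ≤ c ^ 4)]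
        _ = ENNReal.ofReal (c ^ 4) * I t :=
            lintegral_const_mul' _ _ ENNReal.ofReal_ne_top
    have htoReal : (∫⁻ r in Set.Ioi (0 : ℝ),
        ENNReal.ofReal ((u r t) ^ 2 * (v r t) ^ 2 * r)).toReal ≤ c ^ 4 * (I t).toReal := by
      have h1 : (∫⁻ r in Set.Ioi (0 : ℝ),
          ENNReal.ofReal ((u r t) ^ 2 * (v r t) ^ 2 * r)).toReal
          ≤ (ENNReal.ofReal (c ^ 4) * I t).toReal :=
        ENNReal.toReal_mono (ENNReal.mul_ne_top ENNReal.ofReal_ne_top hItop) hIu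
      rwa [ENNReal.toReal_mul, ENNReal.toReal_ofReal (by positivity : (0:ℝ) ≤ c ^ 4)] at h1
    apply ENNReal.ofReal_le_ofReal at htoReal
    have hsq : Real.sqrt ((∫⁻ r in Set.Ioi (0 : ℝ),
        ENNReal.ofReal ((u r t) ^ 2 * (v r t) ^ 2 * r)).toReal)
        ≤ c ^ 2 * Real.sqrt ((I t).toReal) := by
      have h2 : (∫⁻ r in Set.Ioi (0 : ℝ),
          ENNReal.ofReal ((u r t) ^ 2 * (v r t) ^ 2 * r)).toReal ≤ c ^ 4 * (I t).toReal := by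
        have h1 : (∫⁻ r in Set.Ioi (0 : ℝ),
            ENNReal.ofReal ((u r t) ^ 2 * (v r t) ^ 2 * r)).toReal
            ≤ (ENNReal.ofReal (c ^ 4) * I t).toReal :=
          ENNReal.toReal_mono (ENNReal.mul_ne_top ENNReal.ofReal_ne_top hItop) hIu
        rwa [ENNReal.toReal_mul, ENNReal.toReal_ofReal (by positivity : (0:ℝ) ≤ c ^ 4)] at h1
      calc Real.sqrt _ ≤ Real.sqrt (c ^ 4 * (I t).toReal) := Real.sqrt_le_sqrt h2
        _ = Real.sqrt (c ^ 4) * Real.sqrt ((I t).toReal) := Real.sqrt_mul (by positivity) _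
        _ = c ^ 2 * Real.sqrt ((I t).toReal) := by
            rw [show c ^ 4 = (c ^ 2) ^ 2 by ring, Real.sqrt_sq (sq_nonneg c)]
    calc ENNReal.ofReal (Real.sqrt ((∫⁻ r in Set.Ioi (0 : ℝ),
          ENNReal.ofReal ((u r t) ^ 2 * (v r t) ^ 2 * r)).toReal))
        ≤ ENNReal.ofReal (c ^ 2 * Real.sqrt ((I t).toReal)) := ENNReal.ofReal_le_ofReal hsq
      _ = ENNReal.ofReal (c ^ 2) * ENNReal.ofReal (Real.sqrt ((I t).toReal)) :=
          ENNReal.ofReal_mul (sq_nonneg c)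
  constructor
  · calc (∫⁻ t in Set.Ioi (0 : ℝ),
        ENNReal.ofReal (Real.sqrt ((∫⁻ r in Set.Ioi (0 : ℝ),
          ENNReal.ofReal ((u r t) ^ 2 * (v r t) ^ 2 * r)).toReal)))
        ≤ ∫⁻ t in Set.Ioi (0 : ℝ),
            ENNReal.ofReal (c ^ 2) * ENNReal.ofReal (Real.sqrt ((I t).toReal)) :=
          setLIntegral_mono' measurableSet_Ioi hpt1
      _ = ENNReal.ofReal (c ^ 2) * ∫⁻ t in Set.Ioi (0 : ℝ),
            ENNReal.ofReal (Real.sqrt ((I t).toReal)) :=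
          lintegral_const_mul' _ _ ENNReal.ofReal_ne_top
  · have hmono : (∫⁻ t in Set.Ioi (0 : ℝ),
        ENNReal.ofReal (Real.sqrt ((I t).toReal)))
        ≤ ∫⁻ t in Set.Ioi (0 : ℝ), ENNReal.ofReal (4 * (t^2+1) ^ (-(3:ℝ)/4)) :=
      setLIntegral_mono' measurableSet_Ioi fun t ht =>
        ENNReal.ofReal_le_ofReal (sqrt_J_bound t (le_of_lt ht))
    have heq2 : (∫⁻ t in Set.Ioi (0 : ℝ), ENNReal.ofReal (4 * (t^2+1) ^ (-(3:ℝ)/4)))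
        = ENNReal.ofReal (∫ t in Set.Ioi (0:ℝ), 4 * (t^2+1) ^ (-(3:ℝ)/4)) := by
      refine (ofReal_integral_eq_lintegral_ofReal integrableO ?_).symm
      filter_upwards with t
      positivity
    exact lt_of_le_of_lt hmono (by rw [heq2]; exact ENNReal.ofReal_lt_top)
end
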